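/- Let G be a graph and X a homogeneous set of G. Then G contains an odd hole if and only if at least one of G1(X) (obtained from G by deleting all but one vertex of X) or G2(X) = G[X] contains an odd hole. -/

import Mathlib

open SimpleGraph

/-- The bull: a triangle 0,1,2 with pendant edges 0–3 and 1–4. -/
def bull : SimpleGraph (Fin 5) :=
  SimpleGraph.fromRel (fun a b =>
    (a, b) ∈ [((0 : Fin 5), (1 : Fin 5)), (0, 2), (1, 2), (0, 3), (1, 4)])

/-- `G` has an induced copy of `H`. -/
def Contains {V W : Type*} (G : SimpleGraph V) (H : SimpleGraph W) : Prop :=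
  Nonempty (H ↪g G)

/-- `G` has an odd hole: an induced cycle of odd length at least 5. -/
def HasOddHole {V : Type*} (G : SimpleGraph V) : Prop :=
  ∃ n, 5 ≤ n ∧ Odd n ∧ Nonempty (SimpleGraph.cycleGraph n ↪g G)

/-- `e` exhibits a shortest odd hole in `G`. -/
def IsShortestOddHole {V : Type*} (G : SimpleGraph V) {k : ℕ}
    (_e : SimpleGraph.cycleGraph k ↪g G) : Prop :=
  5 ≤ k ∧ Odd k ∧ ∀ m, 5 ≤ m → Odd m → Nonempty (SimpleGraph.cycleGraph m ↪g G) → k ≤ m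

/-- The hole given by `e` is clean: the neighbours on the hole of any vertex off the hole
are contained in a two-edge path `i-1, i, i+1` of the hole. -/
def CleanHole {V : Type*} (G : SimpleGraph V) {k : ℕ}
    (e : SimpleGraph.cycleGraph k ↪g G) : Prop :=
  ∀ v : V, (∀ j, e j ≠ v) →
    ∃ i : Fin k, ∀ j, G.Adj v (e j) → j = i ∨ (SimpleGraph.cycleGraph k).Adj i j

/-- `G` is pure: it has no odd hole, or some shortest odd hole of `G` is clean. -/
def IsPure {V : Type*} (G : SimpleGraph V) : Prop :=
  ¬ HasOddHole G ∨
    ∃ (k : ℕ) (e : SimpleGraph.cycleGraph k ↪g G), IsShortestOddHole G e ∧ CleanHole G e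

/-- `p`, `c`, `a` form an anchor in `G`: `p` is an induced 4-vertex path, `c` is complete
to it, and `a` is anticomplete to it. -/
def IsAnchorIn {V : Type*} (G : SimpleGraph V) (p : Fin 4 → V) (c a : V) : Prop :=
  Function.Injective p ∧ (∀ i, c ≠ p i) ∧ (∀ i, a ≠ p i) ∧ a ≠ c ∧
  (∀ i j : Fin 4, G.Adj (p i) (p j) ↔ ((i : ℕ) + 1 = j ∨ (j : ℕ) + 1 = i)) ∧
  (∀ i, G.Adj c (p i)) ∧ (∀ i, ¬ G.Adj a (p i))

/-- `G` contains an anchor. -/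
def ContainsAnchor {V : Type*} (G : SimpleGraph V) : Prop :=
  ∃ p c a, IsAnchorIn G p c a

/-- `X` is a homogeneous set of `G`. -/
def IsHomogeneousSet {V : Type*} [Fintype V] (G : SimpleGraph V) (X : Finset V) : Prop :=
  1 < X.card ∧ X.card < Fintype.card V ∧
    ∀ v ∉ X, (∀ x ∈ X, G.Adj v x) ∨ (∀ x ∈ X, ¬ G.Adj v x)

open Fin.NatCast Fin.CommRing

lemma fin_boundary {n : ℕ} [NeZero n] (P : Fin n → Prop) (a b : Fin n)
    (ha : P a) (hb : ¬ P b) : ∃ i, P i ∧ ¬ P (i + 1) := by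
  by_contra h
  push_neg at h
  have key : ∀ k : ℕ, P (a + (k : Fin n)) := by
    intro k
    induction k with
    | zero => simpa using ha
    | succ k ih =>
      have := h _ ih
      have harith : a + ((k+1 : ℕ) : Fin n) = a + (k : Fin n) + 1 := by
        push_cast; ring
      rwa [harith]
  have := key ((b - a).val)
  rw [Fin.cast_val_eq_self, add_sub_cancel] at this
  exact hb this

lemma fin_lit_ne {m : ℕ} (a b : ℕ) (ha : a < m + 5) (hb : b < m + 5) (hab : a ≠ b) :
    (a : Fin (m + 5)) ≠ (b : Fin (m + 5)) := by
  simp only [ne_eq, Fin.ext_iff, Fin.val_natCast]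
  rw [Nat.mod_eq_of_lt ha, Nat.mod_eq_of_lt hb]
  exact hab

lemma at_most_one {V : Type*} [Fintype V] {G : SimpleGraph V} {X : Finset V}
    (hX : IsHomogeneousSet G X) {m : ℕ} (e : SimpleGraph.cycleGraph (m + 5) ↪g G)
    (hb : ∃ b, e b ∉ X) : ∀ a a', e a ∈ X → e a' ∈ X → a = a' := by
  intro a a' ha ha'
  obtain ⟨b, hbX⟩ := hb
  obtain ⟨j, hjX, hj1X⟩ := fin_boundary (fun i => e i ∈ X) a b ha hbX
  set u : Fin (m + 5) := j + 1 with hu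
  have hadj_uj : G.Adj (e u) (e j) := by
    refine e.map_rel_iff.mpr ?_
    rw [SimpleGraph.cycleGraph_adj]
    left; rw [hu]; ring
  have hall : ∀ y ∈ X, G.Adj (e u) y := by
    rcases hX.2.2 (e u) hj1X with h | h
    · exact h
    · exact absurd hadj_uj (h (e j) hjX)
  have hnbr : ∀ i, e i ∈ X → i = u - 1 ∨ i = u + 1 := by
    intro i hi
    have hne : u ≠ i := fun h => hj1X (h ▸ hi)
    have h2 : G.Adj (e u) (e i) := hall _ hi
    have h3 := e.map_rel_iff.mp h2
    rw [SimpleGraph.cycleGraph_adj] at h3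
    rcases h3 with h | h
    · left; linear_combination -h
    · right; linear_combination h
  have hu1 : e (u + 1) ∉ X := by
    intro hu1
    have hw : e (u + 2) ∉ X := by
      intro hw
      rcases hnbr _ hw with h | h
      · have h3 : ((3 : ℕ) : Fin (m+5)) = ((0 : ℕ) : Fin (m+5)) := by
          push_cast; linear_combination h
        exact fin_lit_ne 3 0 (by omega) (by omega) (by omega) h3
      · have h3 : ((1 : ℕ) : Fin (m+5)) = ((0 : ℕ) : Fin (m+5)) := by
          push_cast; linear_combination h
        exact fin_lit_ne 1 0 (by omega) (by omega) (by omega) h3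
    have hjmem : e (u - 1) ∈ X := by
      have : u - 1 = j := by rw [hu]; ring
      rw [this]; exact hjX
    have hadj2 : G.Adj (e (u + 2)) (e (u + 1)) := by
      refine e.map_rel_iff.mpr ?_
      rw [SimpleGraph.cycleGraph_adj]
      left; ring
    have hall2 : ∀ y ∈ X, G.Adj (e (u + 2)) y := by
      rcases hX.2.2 (e (u + 2)) hw with h | h
      · exact h
      · exact absurd hadj2 (h (e (u + 1)) hu1)
    have h4 := e.map_rel_iff.mp (hall2 _ hjmem)
    rw [SimpleGraph.cycleGraph_adj] at h4
    rcases h4 with h | h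
    · have h3 : ((2 : ℕ) : Fin (m+5)) = ((0 : ℕ) : Fin (m+5)) := by
        push_cast; linear_combination h
      exact fin_lit_ne 2 0 (by omega) (by omega) (by omega) h3
    · have h3 : ((4 : ℕ) : Fin (m+5)) = ((0 : ℕ) : Fin (m+5)) := by
        push_cast; linear_combination -h
      exact fin_lit_ne 4 0 (by omega) (by omega) (by omega) h3
  have ka : a = u - 1 := (hnbr a ha).resolve_right (fun h => hu1 (h ▸ ha))
  have ka' : a' = u - 1 := (hnbr a' ha').resolve_right (fun h => hu1 (h ▸ ha'))
  rw [ka, ka']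


theorem stmt_10 {V : Type*} [Fintype V] (G : SimpleGraph V) (X : Finset V)
    (hX : IsHomogeneousSet G X) (x : V) (hx : x ∈ X) :
    HasOddHole G ↔
      (HasOddHole (G.induce ((↑X : Set V)ᶜ ∪ {x})) ∨
        HasOddHole (G.induce (↑X : Set V))) := by
  classical
  constructor
  · rintro ⟨n, hn5, hodd, ⟨e⟩⟩
    obtain ⟨m, rfl⟩ : ∃ m, n = m + 5 := ⟨n - 5, by omega⟩
    by_cases hall : ∀ i, e i ∈ X
    · right
      refine ⟨m + 5, by omega, hodd, ⟨⟨⟨fun i => ⟨e i, hall i⟩, ?_⟩, ?_⟩⟩⟩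
      · intro a b h
        exact e.injective (congrArg Subtype.val h)
      · intro a b
        simp only [SimpleGraph.comap_adj, Function.Embedding.coeFn_mk]
        exact e.map_rel_iff
    · left
      push_neg at hall
      have huniq := at_most_one hX e hall
      have hmem : ∀ i : Fin (m + 5), (if e i ∈ X then x else e i) ∈ ((↑X : Set V)ᶜ ∪ {x}) := by
        intro i
        by_cases h : e i ∈ X
        · simp [h]
        · simp only [h, if_false]
          exact Or.inl h
      have hval : ∀ {a b : Fin (m+5)}, e a ∈ X → e b ∉ X →
          (G.Adj x (e b) ↔ (SimpleGraph.cycleGraph (m+5)).Adj a b) := by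
        intro a b haX hbX
        rw [← e.map_rel_iff]
        rcases hX.2.2 (e b) hbX with h | h
        · constructor
          · intro _; exact (h (e a) haX).symm
          · intro _; exact (h x hx).symm
        · constructor
          · intro hc; exact absurd hc.symm (h x hx)
          · intro hc; exact absurd hc.symm (h (e a) haX)
      refine ⟨m + 5, by omega, hodd, ⟨⟨⟨fun i => ⟨if e i ∈ X then x else e i, hmem i⟩, ?_⟩, ?_⟩⟩⟩
      · intro a b h
        have h' : (if e a ∈ X then x else e a) = (if e b ∈ X then x else e b) :=
          congrArg Subtype.val h
        by_cases haX : e a ∈ X <;> by_cases hbX : e b ∈ X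
        · exact huniq a b haX hbX
        · simp only [haX, hbX, if_true, if_false] at h'
          exact absurd (h' ▸ hx) hbX
        · simp only [haX, hbX, if_true, if_false] at h'
          exact absurd (h' ▸ hx) haX
        · simp only [haX, hbX, if_false] at h'
          exact e.injective h'
      · intro a b
        simp only [SimpleGraph.comap_adj, Function.Embedding.coeFn_mk]
        change G.Adj (if e a ∈ X then x else e a) (if e b ∈ X then x else e b) ↔ _
        by_cases haX : e a ∈ X <;> by_cases hbX : e b ∈ X
        · have hab : a = b := huniq a b haX hbX
          subst hab
          simp
        · simp only [haX, hbX, if_true, if_false]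
          exact hval haX hbX
        · simp only [haX, hbX, if_true, if_false]
          exact ⟨fun h => ((hval hbX haX).mp h.symm).symm,
            fun h => ((hval hbX haX).mpr h.symm).symm⟩
        · simp only [haX, hbX, if_false]
          exact e.map_rel_iff
  · rintro (⟨n, hn5, hodd, ⟨f⟩⟩ | ⟨n, hn5, hodd, ⟨f⟩⟩)
    · exact ⟨n, hn5, hodd, ⟨(SimpleGraph.Embedding.induce _).comp f⟩⟩
    · exact ⟨n, hn5, hodd, ⟨(SimpleGraph.Embedding.induce _).comp f⟩⟩
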